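/- Let a₂ ≤ a₃ ≤ ⋯ ≤ a_m be an increasing sequence of positive integers. Then there exist squarefree monomials f₁,…,f_m in some polynomial ring such that deg(f₁) ≤ ⋯ ≤ deg(f_m) and for each k = 2,…,m, the colon ideal (f₁,…,f_{k-1}) : f_k is generated by a regular sequence of monomials each of degree a_k. -/

import Mathlib

open MvPolynomial

/-- `L` is generated by a regular sequence of `r` monomials whose degrees are given by `a`
(a sequence of monomials is regular iff the supports are pairwise disjoint and each is
nonconstant). -/
def IsRegSeqSpan {K : Type} [Field K] {σ : Type} (L : Ideal (MvPolynomial σ K))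
    (r : ℕ) (a : Fin r → ℕ) : Prop :=
  ∃ α : Fin r → (σ →₀ ℕ),
    (∀ t, (α t).support.Nonempty) ∧
    (∀ s t, s ≠ t → Disjoint (α s).support (α t).support) ∧
    (∀ t, (monomial (α t) (1 : K)).totalDegree = a t) ∧
    L = Ideal.span (Set.range fun t => monomial (α t) (1 : K))

/-- Indicator finsupp of a finset. -/
def indF {n : ℕ} (T : Finset (Fin n)) : Fin n →₀ ℕ :=
  ⟨T, fun x => if x ∈ T then 1 else 0, fun a => by by_cases h : a ∈ T <;> simp [h]⟩

lemma indF_apply {n : ℕ} (T : Finset (Fin n)) (x : Fin n) :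
    indF T x = if x ∈ T then 1 else 0 := rfl

lemma indF_support {n : ℕ} (T : Finset (Fin n)) : (indF T).support = T := rfl

lemma indF_insert {n : ℕ} (T : Finset (Fin n)) (a : Fin n) (ha : a ∉ T) :
    indF (insert a T) = Finsupp.single a 1 + indF T := by
  ext x
  simp only [Finsupp.add_apply, indF_apply, Finsupp.single_apply, Finset.mem_insert]
  by_cases hx : x = a
  · subst hx; simp [ha]
  · simp [hx, Ne.symm hx]

lemma prod_X_eq_monomial {K : Type} [Field K] {n : ℕ} (T : Finset (Fin n)) :
    (T.prod fun x => (X x : MvPolynomial (Fin n) K)) = monomial (indF T) 1 := by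
  classical
  induction T using Finset.induction with
  | empty =>
      have : indF (∅ : Finset (Fin n)) = 0 := by ext x; simp [indF_apply]
      simp [this]
  | insert _ _ ha ih =>
      rw [Finset.prod_insert ha, ih, indF_insert _ _ ha, X,
        monomial_mul, one_mul]

theorem stmt_13 {K : Type} [Field K] {m : ℕ} (hm : 0 < m) (a : Fin m → ℕ)
    (hapos : ∀ k : Fin m, 0 < (k : ℕ) → 0 < a k)
    (hmono : ∀ k l : Fin m, 0 < (k : ℕ) → k ≤ l → a k ≤ a l) :
    ∃ (n : ℕ) (S : Fin m → Finset (Fin n)),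
      (∀ k l : Fin m, k ≤ l → (S k).card ≤ (S l).card) ∧
      ∀ k : Fin m, 0 < (k : ℕ) →
        ∃ r : ℕ, IsRegSeqSpan
          ((Ideal.span ((fun l : Fin m => ((S l).prod fun x => (X x : MvPolynomial (Fin n) K)))
              '' {l : Fin m | (l : ℕ) < (k : ℕ)})).colon
            (Ideal.span {(S k).prod fun x => (X x : MvPolynomial (Fin n) K)}))
          r (fun _ => a k) := by
  classical
  -- extended degree sequence
  set b : ℕ → ℕ := fun i => if h : i < m then a ⟨i, h⟩ else 0 with hb
  -- partial sums p j = b 1 + ⋯ + b j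
  set p : ℕ → ℕ := fun j => ∑ i ∈ Finset.range j, b (i + 1) with hp
  have hpmono : ∀ {j j' : ℕ}, j ≤ j' → p j ≤ p j' := by
    intro j j' h
    exact Finset.sum_le_sum_of_subset (Finset.range_subset_range.2 h)
  set P : ℕ := p (m - 1) with hP
  set n : ℕ := 3 * P with hn
  have hpP : ∀ k : Fin m, p ↑k ≤ P := fun k => hpmono (by omega)
  have hSlt : ∀ k : Fin m, ∀ x ∈ Finset.Ico (p ↑k) (P + 2 * p ↑k), x < n := by
    intro k x hx
    have := (Finset.mem_Ico.1 hx).2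
    have := hpP k
    omega
  set S : Fin m → Finset (Fin n) :=
    fun k => (Finset.Ico (p ↑k) (P + 2 * p ↑k)).attachFin (hSlt k) with hS
  have hmemS : ∀ (k : Fin m) (x : Fin n), x ∈ S k ↔ p ↑k ≤ ↑x ∧ ↑x < P + 2 * p ↑k := by
    intro k x
    simp [hS, Finset.mem_attachFin, Finset.mem_Ico]
  refine ⟨n, S, ?_, ?_⟩
  · intro k l hkl
    have h1 : p ↑k ≤ p ↑l := hpmono hkl
    have h2 := hpP k
    simp only [hS, Finset.card_attachFin, Nat.card_Ico]
    omega
  · intro k hk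
    -- the generator of the colon ideal : indicator of [p (k-1), p k)
    have hUlt : ∀ x ∈ Finset.Ico (p (↑k - 1)) (p ↑k), x < n := by
      intro x hx
      have := (Finset.mem_Ico.1 hx).2
      have := hpP k
      omega
    set U : Finset (Fin n) := Finset.attachFin _ hUlt with hU
    have hmemU : ∀ x : Fin n, x ∈ U ↔ p (↑k - 1) ≤ ↑x ∧ ↑x < p ↑k := by
      intro x
      simp [hU, Finset.mem_attachFin, Finset.mem_Ico]
    have hbk : b ↑k = a k := by
      simp [hb, k.isLt]
    have hpk : p ↑k = p ((k : ℕ) - 1) + a k := by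
      have h1 : (k : ℕ) = ((k : ℕ) - 1) + 1 := by omega
      rw [hp]
      simp only []
      conv_lhs => rw [h1]
      rw [Finset.sum_range_succ]
      have h2 : ((k : ℕ) - 1) + 1 = (k : ℕ) := by omega
      rw [h2, hbk]
    have hak : 0 < a k := hapos k hk
    -- the element of Fin m corresponding to k - 1
    set k' : Fin m := ⟨↑k - 1, by omega⟩ with hk'
    -- rewriting products as monomials
    have hprod : ∀ l : Fin m,
        ((S l).prod fun x => (X x : MvPolynomial (Fin n) K)) = monomial (indF (S l)) 1 :=
      fun l => prod_X_eq_monomial _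
    refine ⟨1, fun _ => indF U, ?_, ?_, ?_, ?_⟩
    · intro t
      rw [indF_support]
      refine ⟨⟨p (↑k - 1), by have := hpP k; omega⟩, ?_⟩
      rw [hmemU]
      simp only [Fin.val_mk]
      omega
    · intro s t hst
      exact absurd (Subsingleton.elim s t) hst
    · intro t
      rw [totalDegree_monomial _ (one_ne_zero)]
      have : (indF U).sum (fun _ e => e) = ∑ x ∈ U, 1 := by
        rw [Finsupp.sum]
        rw [indF_support]
        refine Finset.sum_congr rfl ?_
        intro x hx
        rw [indF_apply, if_pos hx]
      rw [this, Finset.sum_const, smul_eq_mul, mul_one, hU, Finset.card_attachFin,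
        Nat.card_Ico, hpk]
      simp
    · -- the colon ideal computation
      have hrange : (Set.range fun _ : Fin 1 => monomial (indF U) (1 : K)) =
          (fun s => monomial s (1 : K)) '' {indF U} := by
        simp [Set.range_const]
      rw [hrange]
      have himg : ((fun l : Fin m => ((S l).prod fun x => (X x : MvPolynomial (Fin n) K)))
            '' {l : Fin m | (l : ℕ) < (k : ℕ)}) =
          (fun s => monomial s (1 : K)) '' ((fun l : Fin m => indF (S l))
            '' {l : Fin m | (l : ℕ) < (k : ℕ)}) := by
        rw [Set.image_image]
        exact Set.image_congr fun l _ => hprod l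
      rw [himg, hprod k]
      ext g
      rw [Ideal.mem_colon_span_singleton, mem_ideal_span_monomial_image,
        mem_ideal_span_monomial_image]
      constructor
      · -- colon membership implies divisibility by monomial (indF U) 1
        intro h d hd
        have hdmem : d + indF (S k) ∈ (g * monomial (indF (S k)) (1 : K)).support := by
          rw [mem_support_iff, coeff_mul_monomial, mul_one]
          exact mem_support_iff.1 hd
        obtain ⟨s, hs, hle⟩ := h _ hdmem
        obtain ⟨l, hl, rfl⟩ := hs
        refine ⟨indF U, Set.mem_singleton _, ?_⟩
        intro x
        rw [indF_apply]
        split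
        · rename_i hxU
          rw [hmemU] at hxU
          have h1 : indF (S l) x = 1 := by
            rw [indF_apply, if_pos]
            rw [hmemS]
            have hlk : p ↑l ≤ p (↑k - 1) := hpmono (by simp at hl; omega)
            have := hpP k
            constructor <;> omega
          have h2 : indF (S k) x = 0 := by
            rw [indF_apply, if_neg]
            rw [hmemS]
            push_neg
            intro hc
            omega
          have := Finsupp.le_def.1 hle x
          rw [h1] at this
          rw [Finsupp.add_apply, h2, add_zero] at this
          exact this
        · exact Nat.zero_le _
      · -- conversely
        intro h d' hd'
        have := support_mul g (monomial (indF (S k)) (1 : K)) hd'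
        rw [support_monomial, if_neg (one_ne_zero)] at this
        rw [Finset.mem_add] at this
        obtain ⟨d, hd, e, he, rfl⟩ := this
        rw [Finset.mem_singleton] at he
        subst he
        refine ⟨indF (S k'), ⟨k', by simp only [hk', Set.mem_setOf_eq, Fin.val_mk]; omega, rfl⟩, ?_⟩
        obtain ⟨s, hs, hle⟩ := h d hd
        rw [Set.mem_singleton_iff] at hs
        subst hs
        intro x
        rw [indF_apply]
        split
        · rename_i hxS
          rw [hmemS] at hxS
          rw [Finsupp.add_apply]
          by_cases hcase : (x : ℕ) < p ↑k
          · have : indF U x = 1 := by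
              rw [indF_apply, if_pos]
              rw [hmemU]
              simp only [hk'] at hxS
              exact ⟨hxS.1, hcase⟩
            have hux := Finsupp.le_def.1 hle x
            rw [this] at hux
            omega
          · have : indF (S k) x = 1 := by
              rw [indF_apply, if_pos]
              rw [hmemS]
              have h1 : p (↑k - 1) ≤ p ↑k := hpmono (by omega)
              simp only [hk'] at hxS
              have h2 : p (↑k - 1) ≤ p ↑k := h1
              constructor
              · omega
              · have : p (↑k - 1) ≤ p ↑k := h1
                omega
            omega
        · exact Nat.zero_le _
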